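/- (Colored Grid Rearrangement Theorem.) Let m1 ≥ m2 ≥ 1 and let χ : Fin m1 × Fin m2 → Fin m1 be a coloring of the cells of an m1 × m2 table in which every color t ∈ Fin m1 is used exactly m2 times. Then there exist a row shuffle permutation ρ and a column shuffle permutation γ of Fin m1 × Fin m2 such that for every cell p, ((γ ∘ ρ) p).1 = χ p; that is, after first shuffling every row and then shuffling every column (m1 + m2 shuffles in total), the item originally in cell p ends in row χ p, so row i contains exactly the items of color i. -/

import Mathlib

/-- A permutation of the cells of an `m1 × m2` table that permutes items only
within each row (the simultaneous effect of `m1` parallel row shuffles). -/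
def IsRowShuffle {m1 m2 : ℕ} (ρ : Equiv.Perm (Fin m1 × Fin m2)) : Prop :=
  ∀ p, (ρ p).1 = p.1

/-- A permutation of the cells of an `m1 × m2` table that permutes items only
within each column (the simultaneous effect of `m2` parallel column shuffles). -/
def IsColShuffle {m1 m2 : ℕ} (γ : Equiv.Perm (Fin m1 × Fin m2)) : Prop :=
  ∀ p, (γ p).2 = p.2

open Finset

lemma grid_decompose (m1 : ℕ) : ∀ (n : ℕ) (α : Fin m1 → Type)
    [∀ i, Fintype (α i)] [∀ i, DecidableEq (α i)]
    (_ : ∀ i, Fintype.card (α i) = n)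
    (χ : (Σ i, α i) → Fin m1)
    (_ : ∀ t, (univ.filter (fun p : Σ i, α i => χ p = t)).card = n),
    ∃ g : (Σ i, α i) → Fin n,
      Function.Injective (fun p => (p.1, g p)) ∧
      Function.Injective (fun p => (χ p, g p)) := by
  intro n
  induction n with
  | zero =>
    intro α _ _ hcard χ hχ
    have hempty : ∀ i, IsEmpty (α i) := fun i => Fintype.card_eq_zero_iff.mp (hcard i)
    exact ⟨fun p => ((hempty p.1).false p.2).elim,
      fun p => ((hempty p.1).false p.2).elim,
      fun p => ((hempty p.1).false p.2).elim⟩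
  | succ n' ih =>
    intro α _ _ hcard χ hχ
    -- Hall's theorem: find a system of distinct representatives (one cell per row,
    -- with all-distinct colors).
    set tset : Fin m1 → Finset (Fin m1) :=
      fun i => (univ : Finset (α i)).image (fun x => χ ⟨i, x⟩) with htset
    have hall : ∀ S : Finset (Fin m1), S.card ≤ (S.biUnion tset).card := by
      intro S
      set T := S.biUnion tset with hT
      have hsub : (univ.filter (fun p : Σ i, α i => p.1 ∈ S)) ⊆
          T.biUnion (fun t => univ.filter (fun p : Σ i, α i => χ p = t)) := by
        intro p hp
        simp only [mem_filter, mem_univ, true_and] at hp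
        refine mem_biUnion.mpr ⟨χ p, ?_, by simp⟩
        exact mem_biUnion.mpr ⟨p.1, hp, mem_image.mpr ⟨p.2, mem_univ _, rfl⟩⟩
      have hC : (univ.filter (fun p : Σ i, α i => p.1 ∈ S)).card = S.card * (n' + 1) := by
        have : (univ.filter (fun p : Σ i, α i => p.1 ∈ S)) =
            S.sigma (fun i => (univ : Finset (α i))) := by
          ext p; simp [Finset.mem_sigma]
        rw [this, Finset.card_sigma]
        simp only [card_univ, hcard]
        rw [Finset.sum_const, smul_eq_mul]
      have hB : (T.biUnion (fun t => univ.filter (fun p : Σ i, α i => χ p = t))).card ≤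
          T.card * (n' + 1) := by
        calc _ ≤ ∑ t ∈ T, (univ.filter (fun p : Σ i, α i => χ p = t)).card :=
              Finset.card_biUnion_le
          _ = T.card * (n' + 1) := by
              rw [Finset.sum_congr rfl (fun t _ => hχ t), Finset.sum_const, smul_eq_mul]
      have := (hC ▸ card_le_card hsub).trans hB
      exact Nat.le_of_mul_le_mul_right this (Nat.succ_pos n')
    obtain ⟨f, hfinj, hfmem⟩ :=
      (Finset.all_card_le_biUnion_card_iff_exists_injective tset).mp hall
    -- choose representative cells
    have hrep : ∀ i, ∃ x : α i, χ ⟨i, x⟩ = f i := by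
      intro i
      obtain ⟨x, _, hx⟩ := mem_image.mp (hfmem i)
      exact ⟨x, hx⟩
    choose a ha using hrep
    have hfbij : Function.Bijective f := (Finite.injective_iff_bijective).mp hfinj
    -- restricted family
    set β : Fin m1 → Type := fun i => {x : α i // x ≠ a i} with hβ
    have hβcard : ∀ i, Fintype.card (β i) = n' := by
      intro i
      show Fintype.card {x : α i // ¬ (x = a i)} = n'
      rw [Fintype.card_subtype_compl, hcard i, Fintype.card_subtype_eq]
      omega
    set ι : (Σ i, β i) → (Σ i, α i) := fun r => ⟨r.1, r.2.1⟩ with hι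
    set χ' : (Σ i, β i) → Fin m1 := fun r => χ (ι r) with hχ'
    have hχ'card : ∀ t, (univ.filter (fun r : Σ i, β i => χ' r = t)).card = n' := by
      intro t
      -- singleton of removed cell of color t
      obtain ⟨i₀, hi₀⟩ := hfbij.surjective t
      have hsingle : (univ.filter (fun p : Σ i, α i => χ p = t)).filter
          (fun p => p.2 = a p.1) = {⟨i₀, a i₀⟩} := by
        ext p
        simp only [mem_filter, mem_univ, true_and, mem_singleton]
        constructor
        · rintro ⟨hc, he⟩
          have hp : p = ⟨p.1, a p.1⟩ := Sigma.ext rfl (heq_of_eq he)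
          have : f p.1 = t := by rw [← hc, hp, ha]
          have : p.1 = i₀ := hfinj (by rw [this, hi₀])
          rw [hp, this]
        · rintro rfl
          exact ⟨by rw [ha, hi₀], rfl⟩
      have hsplit := Finset.card_filter_add_card_filter_not
        (s := univ.filter (fun p : Σ i, α i => χ p = t)) (fun p : Σ i, α i => p.2 = a p.1)
      rw [hsingle, hχ t, Finset.card_singleton] at hsplit
      have hbij : (univ.filter (fun r : Σ i, β i => χ' r = t)).card =
          ((univ.filter (fun p : Σ i, α i => χ p = t)).filter
            (fun p => ¬ p.2 = a p.1)).card := by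
        apply Finset.card_nbij (fun r => ι r)
        · intro r hr
          simp only [Finset.coe_filter, Finset.mem_coe, Set.mem_setOf_eq, mem_filter, mem_univ,
            true_and] at hr ⊢
          exact ⟨hr, r.2.2⟩
        · intro r _ s _ h
          rcases r with ⟨i, x⟩; rcases s with ⟨j, y⟩
          simp only [hι, Sigma.mk.inj_iff] at h
          obtain ⟨rfl, h2⟩ := h
          exact Sigma.ext rfl (heq_of_eq (Subtype.ext (eq_of_heq h2)))
        · intro p hp
          simp only [Finset.coe_filter, Set.mem_setOf_eq, mem_filter, mem_univ,
            true_and] at hp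
          refine ⟨⟨p.1, ⟨p.2, hp.2⟩⟩, ?_, rfl⟩
          simp only [Finset.coe_filter, Set.mem_setOf_eq, mem_univ, true_and]
          exact hp.1
      omega
    obtain ⟨g', hg'1, hg'2⟩ := ih β hβcard χ' hχ'card
    refine ⟨fun p => if h : p.2 = a p.1 then Fin.last n'
        else (g' ⟨p.1, ⟨p.2, h⟩⟩).castSucc, ?_, ?_⟩
    · intro p q hpq
      simp only [Prod.mk.injEq] at hpq
      obtain ⟨h1, h2⟩ := hpq
      by_cases hp : p.2 = a p.1 <;> by_cases hq : q.2 = a q.1 <;>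
        simp only [hp, hq, dif_pos, dif_neg, not_false_iff] at h2
      · have hpe : p = ⟨p.1, a p.1⟩ := Sigma.ext rfl (heq_of_eq hp)
        have hqe : q = ⟨q.1, a q.1⟩ := Sigma.ext rfl (heq_of_eq hq)
        rw [hpe, hqe]
        exact congrArg (fun i => (⟨i, a i⟩ : Σ i, α i)) h1
      · exact absurd h2.symm (Fin.castSucc_lt_last _).ne
      · exact absurd h2 (Fin.castSucc_lt_last _).ne
      · have := hg'1 (a₁ := ⟨p.1, ⟨p.2, hp⟩⟩) (a₂ := ⟨q.1, ⟨q.2, hq⟩⟩)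
          (Prod.ext h1 (Fin.castSucc_injective _ h2))
        exact congrArg ι this
    · intro p q hpq
      simp only [Prod.mk.injEq] at hpq
      obtain ⟨h1, h2⟩ := hpq
      by_cases hp : p.2 = a p.1 <;> by_cases hq : q.2 = a q.1 <;>
        simp only [hp, hq, dif_pos, dif_neg, not_false_iff] at h2
      · have hpe : p = ⟨p.1, a p.1⟩ := Sigma.ext rfl (heq_of_eq hp)
        have hqe : q = ⟨q.1, a q.1⟩ := Sigma.ext rfl (heq_of_eq hq)
        have : f p.1 = f q.1 := by
          rw [← ha, ← ha, ← hpe, ← hqe, h1]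
        have h11 : p.1 = q.1 := hfinj this
        rw [hpe, hqe]
        exact congrArg (fun i => (⟨i, a i⟩ : Σ i, α i)) h11
      · exact absurd h2.symm (Fin.castSucc_lt_last _).ne
      · exact absurd h2 (Fin.castSucc_lt_last _).ne
      · have := hg'2 (a₁ := ⟨p.1, ⟨p.2, hp⟩⟩) (a₂ := ⟨q.1, ⟨q.2, hq⟩⟩)
          (Prod.ext h1 (Fin.castSucc_injective _ h2))
        exact congrArg ι this

/-- Colored Grid Rearrangement Theorem: if every color `t : Fin m1` is used
exactly `m2` times, then after one round of row shuffles followed by one round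
of column shuffles (`m1 + m2` shuffles), every item lands in the row given by
its color. -/
theorem colored_grid_rearrangement
    (m1 m2 : ℕ) (h21 : m2 ≤ m1) (h2 : 1 ≤ m2)
    (χ : Fin m1 × Fin m2 → Fin m1)
    (hχ : ∀ t : Fin m1, (Finset.univ.filter (fun p => χ p = t)).card = m2) :
    ∃ ρ γ : Equiv.Perm (Fin m1 × Fin m2),
      IsRowShuffle ρ ∧ IsColShuffle γ ∧ ∀ p, (γ (ρ p)).1 = χ p := by
  classical
  set χσ : (Σ _ : Fin m1, Fin m2) → Fin m1 := fun r => χ (r.1, r.2) with hχσ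
  have hfib : ∀ t, (univ.filter (fun r : Σ _ : Fin m1, Fin m2 => χσ r = t)).card = m2 := by
    intro t
    refine Eq.trans ?_ (hχ t)
    apply Finset.card_nbij (fun r => (r.1, r.2))
    · intro r hr
      simp only [Finset.coe_filter, Set.mem_setOf_eq, mem_filter, mem_univ, true_and] at hr ⊢
      exact hr
    · intro r _ s _ h
      exact Sigma.ext (congrArg Prod.fst h) (heq_of_eq (congrArg Prod.snd h))
    · intro p hp
      exact ⟨⟨p.1, p.2⟩, by simpa using hp, rfl⟩
  obtain ⟨g, hg1, hg2⟩ := grid_decompose m1 m2 (fun _ => Fin m2)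
    (fun _ => Fintype.card_fin m2) χσ hfib
  set e0 : Fin m1 × Fin m2 → Fin m1 × Fin m2 := fun p => (p.1, g ⟨p.1, p.2⟩) with he0
  have he0inj : Function.Injective e0 := by
    intro p q h
    have := hg1 (a₁ := ⟨p.1, p.2⟩) (a₂ := ⟨q.1, q.2⟩) h
    exact congrArg (fun r : Σ _ : Fin m1, Fin m2 => (r.1, r.2)) this
  set ρ : Equiv.Perm (Fin m1 × Fin m2) :=
    Equiv.ofBijective e0 ((Finite.injective_iff_bijective).mp he0inj) with hρ
  set c : Fin m1 × Fin m2 → Fin m1 × Fin m2 := fun q => (χ (ρ.symm q), q.2) with hc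
  have hcinj : Function.Injective c := by
    intro q q' h
    have h1 : (c q).1 = (c q').1 := congrArg Prod.fst h
    have h2 : (c q).2 = (c q').2 := congrArg Prod.snd h
    have hq : e0 (ρ.symm q) = q := ρ.apply_symm_apply q
    have hq' : e0 (ρ.symm q') = q' := ρ.apply_symm_apply q'
    have hg : g ⟨(ρ.symm q).1, (ρ.symm q).2⟩ = g ⟨(ρ.symm q').1, (ρ.symm q').2⟩ := by
      rw [show g ⟨(ρ.symm q).1, (ρ.symm q).2⟩ = (e0 (ρ.symm q)).2 from rfl,
        show g ⟨(ρ.symm q').1, (ρ.symm q').2⟩ = (e0 (ρ.symm q')).2 from rfl, hq, hq', h2]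
    have := hg2 (a₁ := ⟨(ρ.symm q).1, (ρ.symm q).2⟩) (a₂ := ⟨(ρ.symm q').1, (ρ.symm q').2⟩)
      (Prod.ext h1 hg)
    have hpp : ρ.symm q = ρ.symm q' :=
      congrArg (fun r : Σ _ : Fin m1, Fin m2 => (r.1, r.2)) this
    calc q = ρ (ρ.symm q) := (ρ.apply_symm_apply q).symm
      _ = ρ (ρ.symm q') := by rw [hpp]
      _ = q' := ρ.apply_symm_apply q'
  set γ : Equiv.Perm (Fin m1 × Fin m2) :=
    Equiv.ofBijective c ((Finite.injective_iff_bijective).mp hcinj) with hγ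
  refine ⟨ρ, γ, fun p => rfl, fun p => rfl, fun p => ?_⟩
  show (c (ρ p)).1 = χ p
  show χ (ρ.symm (ρ p)) = χ p
  rw [ρ.symm_apply_apply]
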